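/- Let m and n be nonzero integers and let D = [[m, 0], [0, mn]]. For every regular language L ⊆ Σ* there exists a regular language L' ⊆ Σ* such that φ(L') = {B ∈ GL(2,ℤ) : there exists w ∈ L with φ(w) ∈ H(n) and φ(w)·D = D·B}. In other words, for any regular subset 𝒮 ⊆ GL(2,ℤ), the set of D-conjugates {D⁻¹AD : A ∈ 𝒮 ∩ H(n)} is a regular subset of GL(2,ℤ). -/

import Mathlib

/-- 2×2 integer matrices. -/
abbrev M2 := Matrix (Fin 2) (Fin 2) ℤ

/-- A matrix belongs to GL(2,ℤ), i.e. has determinant ±1. -/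
def IsGL (A : M2) : Prop := A.det = 1 ∨ A.det = -1

/-- The four-letter alphabet Σ = {X, N, S, R}. -/
inductive Alph : Type | X | N | S | R
deriving DecidableEq

instance : Fintype Alph :=
  ⟨{Alph.X, Alph.N, Alph.S, Alph.R}, fun x => by cases x <;> simp⟩

/-- The matrices assigned to letters of Σ. -/
def phiLetter : Alph → M2
  | Alph.X => !![-1, 0; 0, -1]
  | Alph.N => !![1, 0; 0, -1]
  | Alph.S => !![0, -1; 1, 0]
  | Alph.R => !![0, -1; 1, 1]

/-- The monoid homomorphism φ : Σ* → GL(2,ℤ) (valued in matrices). -/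
def phi (w : List Alph) : M2 := (w.map phiLetter).prod

/-- A word over Σ is canonical: no subword SS or RRR, the letter N occurs only in
the first position, and X occurs only in the first position or immediately after N. -/
def Canonical (w : List Alph) : Prop :=
  ¬ [Alph.S, Alph.S] <:+: w ∧
  ¬ [Alph.R, Alph.R, Alph.R] <:+: w ∧
  (∀ i : Fin w.length, w.get i = Alph.N → (i : ℕ) = 0) ∧
  (∀ i : Fin w.length, w.get i = Alph.X →
      (i : ℕ) = 0 ∨ ((i : ℕ) = 1 ∧ w.get ⟨0, Nat.lt_of_le_of_lt (Nat.zero_le _) i.isLt⟩ = Alph.N))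

/-- A subset of GL(2,ℤ) is regular if it is the image under φ of a regular language. -/
def RegularSubset (S : Set M2) : Prop :=
  ∃ L : Language Alph, L.IsRegular ∧ phi '' L = S

open Matrix in
theorem phi_nil : phi [] = 1 := rfl
theorem phi_cons (a : Alph) (w : List Alph) : phi (a :: w) = phiLetter a * phi w := by
  simp [phi]
theorem phi_append (u v : List Alph) : phi (u ++ v) = phi u * phi v := by
  simp [phi]
theorem isGL_one : IsGL 1 := Or.inl (by simp)
theorem IsGL.mul {A B : M2} (hA : IsGL A) (hB : IsGL B) : IsGL (A * B) := by
  rcases hA with h | h <;> rcases hB with h' | h' <;>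
    simp [IsGL, Matrix.det_mul, h, h']
theorem isGL_letter (a : Alph) : IsGL (phiLetter a) := by
  cases a <;> simp [phiLetter, IsGL, Matrix.det_fin_two_of]
theorem isGL_phi (w : List Alph) : IsGL (phi w) := by
  induction w with
  | nil => exact isGL_one
  | cons a w ih => rw [phi_cons]; exact (isGL_letter a).mul ih

/-- explicit inverse of a GL2 matrix -/
def inv2 (A : M2) : M2 := A.det • !![A 1 1, -A 0 1; -A 1 0, A 0 0]

theorem mul_inv2 {A : M2} (h : IsGL A) : A * inv2 A = 1 := by
  have := Matrix.mul_adjugate A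
  rw [Matrix.adjugate_fin_two] at this
  rw [inv2, Matrix.mul_smul, this, smul_smul]
  rcases h with h | h <;> rw [h] <;> norm_num
theorem inv2_mul {A : M2} (h : IsGL A) : inv2 A * A = 1 := by
  have := Matrix.adjugate_mul A
  rw [Matrix.adjugate_fin_two] at this
  rw [inv2, Matrix.smul_mul, this, smul_smul]
  rcases h with h | h <;> rw [h] <;> norm_num
theorem isGL_inv2 {A : M2} (h : IsGL A) : IsGL (inv2 A) := by
  have h1 := mul_inv2 h
  have : A.det * (inv2 A).det = 1 := by rw [← Matrix.det_mul, h1]; simp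
  rcases h with h | h <;> rw [h] at this <;> [left; right] <;> omega

-- words for T and T⁻¹
theorem phi_T : phi [Alph.X, Alph.S, Alph.R] = !![1, 1; 0, 1] := by
  simp [phi, phiLetter]
theorem phi_Ti : phi [Alph.R, Alph.R, Alph.R, Alph.R, Alph.R, Alph.S, Alph.S, Alph.S, Alph.X] = !![1, -1; 0, 1] := by
  simp [phi, phiLetter]

/-- word mapping to T^b -/
def powT (b : ℤ) : List Alph :=
  if 0 ≤ b then (List.replicate b.toNat [Alph.X, Alph.S, Alph.R]).flatten
  else (List.replicate (-b).toNat [Alph.R, Alph.R, Alph.R, Alph.R, Alph.R, Alph.S, Alph.S, Alph.S, Alph.X]).flatten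

theorem phi_flatten_replicate (k : ℕ) (u : List Alph) :
    phi (List.replicate k u).flatten = phi u ^ k := by
  induction k with
  | zero => simp [phi_nil]
  | succ k ih => rw [List.replicate_succ, List.flatten_cons, phi_append, ih, pow_succ']

theorem T_pow (k : ℕ) : (!![1, 1; 0, 1] : M2) ^ k = !![1, (k : ℤ); 0, 1] := by
  induction k with
  | zero => rw [pow_zero, Matrix.one_fin_two]; norm_num
  | succ k ih =>
      rw [pow_succ, ih, Matrix.mul_fin_two]
      norm_num
      rw [add_comm]
theorem Ti_pow (k : ℕ) : (!![1, -1; 0, 1] : M2) ^ k = !![1, -(k : ℤ); 0, 1] := by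
  induction k with
  | zero => rw [pow_zero, Matrix.one_fin_two]; norm_num
  | succ k ih =>
      rw [pow_succ, ih, Matrix.mul_fin_two]
      norm_num

theorem phi_powT (b : ℤ) : phi (powT b) = !![1, b; 0, 1] := by
  unfold powT
  split
  · rw [phi_flatten_replicate, phi_T, T_pow, Int.toNat_of_nonneg ‹_›]
  · rw [phi_flatten_replicate, phi_Ti, Ti_pow]
    have : 0 ≤ -b := by omega
    rw [Int.toNat_of_nonneg this]; ring_nf

theorem natAbs_emod_lt (a c : ℤ) (h : c ≠ 0) : (a % c).natAbs < c.natAbs := by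
  have h1 : 0 ≤ a % c := Int.emod_nonneg a h
  have h2 : a % |c| < |c| := Int.emod_lt_of_pos a (abs_pos.mpr h)
  rw [Int.emod_abs] at h2
  have : (c.natAbs : ℤ) = |c| := Int.abs_eq_natAbs c ▸ rfl
  omega

theorem phi_S3 : phi [Alph.S, Alph.S, Alph.S] = !![0, 1; -1, 0] := by
  simp [phi, phiLetter]

theorem phi_surj_c0 (a b d : ℤ) (hdet : a * d - b * 0 = 1) : ∃ w, phi w = !![a, b; 0, d] := by
  have had : a * d = 1 := by linarith
  rcases Int.mul_eq_one_iff_eq_one_or_neg_one.mp had with ⟨ha, hd⟩ | ⟨ha, hd⟩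
  · subst ha hd
    exact ⟨powT b, phi_powT b⟩
  · subst ha hd
    refine ⟨Alph.X :: powT (-b), ?_⟩
    rw [phi_cons, phi_powT]
    show !![-1, 0; 0, -1] * _ = _
    rw [Matrix.mul_fin_two]
    norm_num

theorem phi_surj_aux : ∀ (N : ℕ) (a b c d : ℤ), c.natAbs ≤ N → a * d - b * c = 1 →
    ∃ w, phi w = !![a, b; c, d] := by
  intro N
  induction N with
  | zero =>
    intro a b c d hN hdet
    have hc : c = 0 := by omega
    subst hc
    exact phi_surj_c0 a b d hdet
  | succ N ih =>
    intro a b c d hN hdet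
    by_cases hc : c = 0
    · subst hc
      exact phi_surj_c0 a b d hdet
    · set q := a / c with hq
      set r := a % c with hr
      have har : a = c * q + r := (Int.mul_ediv_add_emod a c).symm
      have hlt : r.natAbs < c.natAbs := natAbs_emod_lt a c hc
      have hdetB : (-c) * (b - q * d) - (-d) * r = 1 := by linear_combination hdet - d * har
      obtain ⟨wB, hwB⟩ := ih (-c) (-d) r (b - q * d) (by omega) hdetB
      refine ⟨powT q ++ [Alph.S, Alph.S, Alph.S] ++ wB, ?_⟩
      rw [phi_append, phi_append, phi_powT, phi_S3, hwB, Matrix.mul_fin_two, Matrix.mul_fin_two]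
      ext i j
      fin_cases i <;> fin_cases j <;> simp <;> linear_combination -har

theorem det_phiLetter_N : (phiLetter Alph.N).det = -1 := by
  simp [phiLetter, Matrix.det_fin_two_of]

theorem phi_surj_det1 (A : M2) (h : A.det = 1) : ∃ w, phi w = A := by
  rw [Matrix.det_fin_two] at h
  obtain ⟨w, hw⟩ := phi_surj_aux (A 1 0).natAbs (A 0 0) (A 0 1) (A 1 0) (A 1 1) le_rfl
    (by linarith)
  exact ⟨w, by rw [hw, ← Matrix.eta_fin_two]⟩

theorem phi_surj {A : M2} (h : IsGL A) : ∃ w, phi w = A := by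
  rcases h with h | h
  · exact phi_surj_det1 A h
  · obtain ⟨w, hw⟩ := phi_surj_det1 (phiLetter Alph.N * A)
      (by rw [Matrix.det_mul, det_phiLetter_N, h]; norm_num)
    refine ⟨Alph.N :: w, ?_⟩
    rw [phi_cons, hw, ← mul_assoc]
    have : phiLetter Alph.N * phiLetter Alph.N = 1 := by
      simp [phiLetter, Matrix.one_fin_two]
    rw [this, one_mul]

/-! ### Conjugation by D = !![m, 0; 0, m*n] -/

def Dmat (m n : ℤ) : M2 := !![m, 0; 0, m * n]
def conjD (n : ℤ) (h : M2) : M2 := !![h 0 0, h 0 1 * n; h 1 0 / n, h 1 1]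

theorem D_conjD {n : ℤ} (m : ℤ) {h : M2} (hd : n ∣ h 1 0) :
    h * Dmat m n = Dmat m n * conjD n h := by
  have hc : n * (h 1 0 / n) = h 1 0 := Int.mul_ediv_cancel' hd
  ext i j
  fin_cases i <;> fin_cases j <;>
    simp [Dmat, conjD, Matrix.mul_apply, Fin.sum_univ_two] <;> ring_nf <;>
    linear_combination (-m) * hc

theorem Dcancel {m n : ℤ} (hm : m ≠ 0) (hn : n ≠ 0) {A B : M2}
    (h : Dmat m n * A = Dmat m n * B) : A = B := by
  ext i j
  fin_cases i
  · have h' := congrArg (fun M : M2 => M 0 j) h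
    simp only [Dmat, Matrix.mul_apply, Fin.sum_univ_two, Matrix.cons_val', Matrix.cons_val_zero,
      Matrix.cons_val_one, Matrix.head_cons, Matrix.empty_val', Matrix.cons_val_fin_one,
      Matrix.head_fin_const, Matrix.of_apply, zero_mul, add_zero, zero_add] at h'
    exact mul_left_cancel₀ hm h'
  · have h' := congrArg (fun M : M2 => M 1 j) h
    simp only [Dmat, Matrix.mul_apply, Fin.sum_univ_two, Matrix.cons_val', Matrix.cons_val_zero,
      Matrix.cons_val_one, Matrix.head_cons, Matrix.empty_val', Matrix.cons_val_fin_one,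
      Matrix.head_fin_const, Matrix.of_apply, zero_mul, add_zero, zero_add] at h'
    rw [mul_assoc, mul_assoc] at h'
    exact mul_left_cancel₀ hn (mul_left_cancel₀ hm h')

theorem mul21 (A B : M2) : (A * B) 1 0 = A 1 0 * B 0 0 + A 1 1 * B 1 0 := by
  simp [Matrix.mul_apply, Fin.sum_univ_two]

theorem dvd_mul21 {n : ℤ} {A B : M2} (hA : n ∣ A 1 0) (hB : n ∣ B 1 0) :
    n ∣ (A * B) 1 0 := by
  rw [mul21]
  exact dvd_add (Dvd.dvd.mul_right hA _) (Dvd.dvd.mul_left hB _)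

theorem conjD_mul {m n : ℤ} (hm : m ≠ 0) (hn : n ≠ 0) {A B : M2}
    (hA : n ∣ A 1 0) (hB : n ∣ B 1 0) :
    conjD n (A * B) = conjD n A * conjD n B := by
  apply Dcancel hm hn
  rw [← D_conjD m (dvd_mul21 hA hB), ← mul_assoc, ← D_conjD m hA, mul_assoc, mul_assoc,
    ← D_conjD m hB]

theorem conjD_one {n : ℤ} : conjD n 1 = 1 := by
  ext i j
  fin_cases i <;> fin_cases j <;> simp [conjD, Matrix.one_apply]

theorem isGL_conjD {n : ℤ} {h : M2} (hd : n ∣ h 1 0) (hh : IsGL h) : IsGL (conjD n h) := by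
  have hc : n * (h 1 0 / n) = h 1 0 := Int.mul_ediv_cancel' hd
  have : (conjD n h).det = h.det := by
    rw [conjD, Matrix.det_fin_two_of, Matrix.det_fin_two]
    linear_combination - h 0 1 * hc
  rw [IsGL, this]
  exact hh

/-! ### Homomorphic images of regular languages -/

section Image

variable {Δ B : Type} [Fintype Δ] [DecidableEq B] {σ : Type} [Fintype σ]

variable (f : Δ → List B)

/-- all suffixes of output words -/
def TF : Finset (List B) :=
  insert [] (Finset.univ.biUnion fun a : Δ => (f a).tails.toFinset)

theorem nil_mem_TF : ([] : List B) ∈ TF f := Finset.mem_insert_self _ _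

theorem suffix_mem_TF {a : Δ} {t : List B} (h : t <:+ f a) : t ∈ TF f := by
  refine Finset.mem_insert_of_mem (Finset.mem_biUnion.mpr ⟨a, Finset.mem_univ a, ?_⟩)
  rw [List.mem_toFinset, List.mem_tails]
  exact h

theorem tail_mem_TF {t : List B} {b : B} (h : b :: t ∈ TF f) : t ∈ TF f := by
  rcases Finset.mem_insert.mp h with h | h
  · cases h
  · obtain ⟨a, -, ha⟩ := Finset.mem_biUnion.mp h
    rw [List.mem_toFinset, List.mem_tails] at ha
    exact suffix_mem_TF f ((List.suffix_cons b t).trans ha)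

/-- The NFA accepting `{ r.flatMap f | r ∈ M.accepts }`. -/
def imgNFA (M : DFA Δ σ) : NFA B (σ × {l : List B // l ∈ TF f}) where
  step := fun s b =>
    {s2 | (s.2.1 = [] ∧ ∃ a, f a = b :: s2.2.1 ∧ s2.1 = M.step s.1 a) ∨
          (s2.1 = s.1 ∧ s.2.1 = b :: s2.2.1)}
  start := {s2 | s2.1 = M.start ∧ s2.2.1 = []}
  accept := {s2 | s2.1 ∈ M.accept ∧ s2.2.1 = []}

variable (M : DFA Δ σ)

theorem imgNFA_drain : ∀ (t : List B) (ht : t ∈ TF f) (S : Set (σ × {l : List B // l ∈ TF f}))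
    (q : σ), (⟨q, ⟨t, ht⟩⟩ ∈ S) → (⟨q, ⟨[], nil_mem_TF f⟩⟩ ∈ (imgNFA f M).evalFrom S t) := by
  intro t
  induction t with
  | nil => intro ht S q hq; exact hq
  | cons b t ih =>
    intro ht S q hq
    have ht' : t ∈ TF f := tail_mem_TF f ht
    have hstep : (⟨q, ⟨t, ht'⟩⟩ : σ × {l : List B // l ∈ TF f}) ∈
        (imgNFA f M).stepSet S b := by
      rw [NFA.mem_stepSet]
      exact ⟨⟨q, ⟨b :: t, ht⟩⟩, hq, Or.inr ⟨rfl, rfl⟩⟩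
    exact ih ht' _ q hstep

theorem imgNFA_push (hf : ∀ a, f a ≠ []) (S : Set (σ × {l : List B // l ∈ TF f})) (q : σ)
    (a : Δ) (hq : (⟨q, ⟨[], nil_mem_TF f⟩⟩ ∈ S)) :
    (⟨M.step q a, ⟨[], nil_mem_TF f⟩⟩ ∈ (imgNFA f M).evalFrom S (f a)) := by
  cases hfa : f a with
  | nil => exact absurd hfa (hf a)
  | cons b t =>
    have ht : t ∈ TF f := suffix_mem_TF f (hfa ▸ List.suffix_cons b t)
    have hstep : (⟨M.step q a, ⟨t, ht⟩⟩ : σ × {l : List B // l ∈ TF f}) ∈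
        (imgNFA f M).stepSet S b := by
      rw [NFA.mem_stepSet]
      exact ⟨⟨q, ⟨[], nil_mem_TF f⟩⟩, hq, Or.inl ⟨rfl, a, hfa, rfl⟩⟩
    exact imgNFA_drain f M t ht _ _ hstep

theorem evalFrom_append (N : NFA B (σ × {l : List B // l ∈ TF f}))
    (S : Set (σ × {l : List B // l ∈ TF f})) (x y : List B) :
    N.evalFrom S (x ++ y) = N.evalFrom (N.evalFrom S x) y :=
  List.foldl_append

theorem imgNFA_complete (hf : ∀ a, f a ≠ []) (r : List Δ) :
    (⟨M.evalFrom M.start r, ⟨[], nil_mem_TF f⟩⟩ ∈ (imgNFA f M).eval (r.flatMap f)) := by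
  induction r using List.reverseRec with
  | nil => exact ⟨rfl, rfl⟩
  | append_singleton r a ih =>
    rw [List.flatMap_append]
    unfold NFA.eval
    rw [evalFrom_append]
    simp only [List.flatMap_cons, List.flatMap_nil, List.append_nil]
    rw [DFA.evalFrom_append_singleton]
    exact imgNFA_push f M hf _ _ a ih

theorem imgNFA_sound : ∀ (x : List B) (s2 : σ × {l : List B // l ∈ TF f}),
    s2 ∈ (imgNFA f M).eval x →
    ∃ r, M.evalFrom M.start r = s2.1 ∧ x ++ s2.2.1 = r.flatMap f := by
  intro x
  induction x using List.reverseRec with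
  | nil =>
    intro s2 hs2
    obtain ⟨h1, h2⟩ := hs2
    exact ⟨[], h1.symm, by simp [h2]⟩
  | append_singleton x b ih =>
    intro s2 hs2
    rw [NFA.eval_append_singleton, NFA.mem_stepSet] at hs2
    obtain ⟨s1, hs1, hstep⟩ := hs2
    obtain ⟨r, hr1, hr2⟩ := ih s1 hs1
    rcases hstep with ⟨hnil, a, hfa, hstep⟩ | ⟨h1, h2⟩
    · refine ⟨r ++ [a], ?_, ?_⟩
      · rw [DFA.evalFrom_append_singleton, hr1, hstep]
      · rw [List.flatMap_append, ← hr2, hnil, List.append_nil]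
        simp [hfa]
    · refine ⟨r, h1 ▸ hr1, ?_⟩
      rw [← hr2, h2]
      simp

theorem imgNFA_accepts (hf : ∀ a, f a ≠ []) :
    (imgNFA f M).accepts = {x : List B | ∃ r ∈ M.accepts, x = r.flatMap f} := by
  ext x
  constructor
  · rintro ⟨s2, hacc, heval⟩
    obtain ⟨r, hr1, hr2⟩ := imgNFA_sound f M x s2 heval
    refine ⟨r, ?_, ?_⟩
    · show M.eval r ∈ M.accept
      rw [DFA.eval, hr1]
      exact hacc.1
    · rw [← hr2, hacc.2, List.append_nil]
  · rintro ⟨r, hr, rfl⟩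
    exact ⟨⟨M.evalFrom M.start r, ⟨[], nil_mem_TF f⟩⟩, ⟨hr, rfl⟩,
      imgNFA_complete f M hf r⟩

theorem isRegular_image (hf : ∀ a, f a ≠ []) :
    Language.IsRegular {x : List B | ∃ r ∈ M.accepts, x = r.flatMap f} := by
  refine ⟨Set (σ × {l : List B // l ∈ TF f}), inferInstance, (imgNFA f M).toDFA, ?_⟩
  rw [NFA.toDFA_correct, imgNFA_accepts f M hf]

end Image

/-! ### Reduction mod n and representatives -/

abbrev Cmat (n : ℤ) := Matrix (Fin 2) (Fin 2) (ZMod n.natAbs)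

def pr (n : ℤ) : M2 →+* Cmat n := (Int.castRingHom (ZMod n.natAbs)).mapMatrix

theorem pr_entry (n : ℤ) (A : M2) (i j : Fin 2) : pr n A i j = ((A i j : ℤ) : ZMod n.natAbs) := rfl

theorem pr_dvd_iff {n : ℤ} (hn : n ≠ 0) (A : M2) : pr n A 1 0 = 0 ↔ n ∣ A 1 0 := by
  rw [pr_entry, ZMod.intCast_zmod_eq_zero_iff_dvd, Int.natAbs_dvd]

open Classical in
noncomputable def repM (n : ℤ) (c : Cmat n) : M2 :=
  if c = 1 then 1
  else if h : ∃ w : List Alph, pr n (phi w) = c then phi h.choose else 1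

theorem repM_one (n : ℤ) : repM n 1 = 1 := if_pos rfl

theorem isGL_repM (n : ℤ) (c : Cmat n) : IsGL (repM n c) := by
  classical
  unfold repM
  split
  · exact isGL_one
  · split
    · exact isGL_phi _
    · exact isGL_one

theorem pr_repM {n : ℤ} {c : Cmat n} (h : ∃ w : List Alph, pr n (phi w) = c) :
    pr n (repM n c) = c := by
  classical
  unfold repM
  split
  · rw [map_one]; exact (‹c = 1›).symm
  · exact h.choose_spec

/-! ### The run automaton and output substitution -/

theorem pr_phi_exists_mul {n : ℤ} {c : Cmat n} (hc : ∃ v, pr n (phi v) = c) (a : Alph) :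
    ∃ v, pr n (phi v) = c * pr n (phiLetter a) := by
  obtain ⟨v, hv⟩ := hc
  exact ⟨v ++ [a], by rw [phi_append, map_mul, hv]; simp [phi, map_mul]⟩

theorem pr_inv2_repM {n : ℤ} (x : Cmat n) :
    pr n (repM n x) * pr n (inv2 (repM n x)) = 1 := by
  rw [← map_mul, mul_inv2 (isGL_repM n x), map_one]

theorem dvd_sandwich {n : ℤ} (hn : n ≠ 0) {A : M2} {x : Cmat n}
    (hx : ∃ v, pr n (phi v) = x) (hA : pr n A = x) :
    n ∣ (A * inv2 (repM n x)) 1 0 := by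
  rw [← pr_dvd_iff hn]
  have h2 := pr_inv2_repM (n := n) x
  rw [pr_repM hx] at h2
  have : pr n (A * inv2 (repM n x)) = 1 := by
    rw [map_mul, hA, h2]
  rw [this]
  simp [Matrix.one_apply]

theorem dvd_repM {n : ℤ} (hn : n ≠ 0) {x : Cmat n} (hx : ∃ v, pr n (phi v) = x)
    (h0 : x 1 0 = 0) : n ∣ (repM n x) 1 0 := by
  rw [← pr_dvd_iff hn, pr_repM hx, h0]

open Classical in
noncomputable def wordOf (A : M2) : List Alph :=
  (if h : ∃ w, phi w = A then h.choose else []) ++ [Alph.X, Alph.X]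

theorem wordOf_ne_nil (A : M2) : wordOf A ≠ [] := by simp [wordOf]

theorem phi_XX : phi [Alph.X, Alph.X] = 1 := by simp [phi, phiLetter, Matrix.one_fin_two]

theorem phi_wordOf {A : M2} (h : IsGL A) : phi (wordOf A) = A := by
  unfold wordOf
  rw [phi_append, phi_XX, mul_one]
  split
  · rename_i h'
    exact h'.choose_spec
  · exact absurd (phi_surj h) ‹_›

section Main

variable (n : ℤ) {σ₀ : Type} (M₀ : DFA Alph σ₀)

/-- states tracking the original DFA and the matrix mod n -/
abbrev QC := σ₀ × Cmat n

def stepQ (q : QC n (σ₀ := σ₀)) (a : Alph) : QC n (σ₀ := σ₀) :=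
  (M₀.step q.1 a, q.2 * pr n (phiLetter a))

def acceptQ : Set (QC n (σ₀ := σ₀)) := {q | q.1 ∈ M₀.accept ∧ q.2 1 0 = 0}

/-- annotated run -/
def ann : QC n (σ₀ := σ₀) → List Alph → List (QC n (σ₀ := σ₀) × Alph)
  | _, [] => []
  | q, a :: w => (q, a) :: ann (stepQ n M₀ q a) w

theorem foldl_stepQ (w : List Alph) : ∀ (s : σ₀) (c : Cmat n),
    List.foldl (stepQ n M₀) (s, c) w = (M₀.evalFrom s w, c * pr n (phi w)) := by
  induction w with
  | nil => intro s c; simp [phi_nil, DFA.evalFrom]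
  | cons a w ih =>
    intro s c
    rw [List.foldl_cons]
    show List.foldl (stepQ n M₀) (M₀.step s a, c * pr n (phiLetter a)) w = _
    rw [ih, phi_cons, map_mul, mul_assoc]
    rfl

open Classical in
/-- the DFA over the annotated alphabet recognizing valid accepting runs -/
noncomputable def runDFA :
    DFA ((QC n (σ₀ := σ₀) × Alph) ⊕ QC n (σ₀ := σ₀)) (Option (QC n (σ₀ := σ₀) ⊕ Unit)) where
  step := fun s d =>
    match s, d with
    | some (Sum.inl q), Sum.inl (p, a) =>
        if p = q then some (Sum.inl (stepQ n M₀ q a)) else none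
    | some (Sum.inl q), Sum.inr p =>
        if p = q ∧ q ∈ acceptQ n M₀ then some (Sum.inr ()) else none
    | _, _ => none
  start := some (Sum.inl (M₀.start, 1))
  accept := {some (Sum.inr ())}

theorem runDFA_dead : ∀ r, (runDFA n M₀).evalFrom none r = none := by
  intro r
  induction r with
  | nil => rfl
  | cons d r ih => exact ih

theorem runDFA_post : ∀ r, (runDFA n M₀).evalFrom (some (Sum.inr ())) r = some (Sum.inr ()) →
    r = [] := by
  intro r h
  cases r with
  | nil => rfl
  | cons d r =>
    exfalso
    have : (runDFA n M₀).evalFrom (some (Sum.inr ())) (d :: r) =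
        (runDFA n M₀).evalFrom none r := rfl
    rw [this, runDFA_dead] at h
    exact nomatch h

theorem runDFA_complete : ∀ (w : List Alph) (st : QC n (σ₀ := σ₀)),
    List.foldl (stepQ n M₀) st w ∈ acceptQ n M₀ →
    (runDFA n M₀).evalFrom (some (Sum.inl st))
      ((ann n M₀ st w).map Sum.inl ++ [Sum.inr (List.foldl (stepQ n M₀) st w)]) =
      some (Sum.inr ()) := by
  intro w
  classical
  induction w with
  | nil =>
    intro st hacc
    show (runDFA n M₀).step (some (Sum.inl st)) (Sum.inr st) = some (Sum.inr ())
    show (if st = st ∧ st ∈ acceptQ n M₀ then some (Sum.inr ()) else none) = _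
    rw [if_pos ⟨rfl, hacc⟩]
  | cons a w ih =>
    intro st hacc
    show (runDFA n M₀).evalFrom
      ((runDFA n M₀).step (some (Sum.inl st)) (Sum.inl (st, a))) _ = _
    have hstep : (runDFA n M₀).step (some (Sum.inl st)) (Sum.inl (st, a)) =
        some (Sum.inl (stepQ n M₀ st a)) := by
      show (if st = st then _ else none) = _
      rw [if_pos rfl]
    rw [hstep]
    exact ih (stepQ n M₀ st a) hacc

theorem runDFA_sound : ∀ (r : List ((QC n (σ₀ := σ₀) × Alph) ⊕ QC n (σ₀ := σ₀)))
    (st : QC n (σ₀ := σ₀)),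
    (runDFA n M₀).evalFrom (some (Sum.inl st)) r = some (Sum.inr ()) →
    ∃ w, r = (ann n M₀ st w).map Sum.inl ++ [Sum.inr (List.foldl (stepQ n M₀) st w)] ∧
      List.foldl (stepQ n M₀) st w ∈ acceptQ n M₀ := by
  classical
  intro r
  induction r with
  | nil =>
    intro st h
    exact absurd h (by simp [DFA.evalFrom])
  | cons d r ih =>
    intro st h
    have hx : (runDFA n M₀).evalFrom ((runDFA n M₀).step (some (Sum.inl st)) d) r =
        some (Sum.inr ()) := h
    cases d with
    | inl pa =>
      obtain ⟨p, a⟩ := pa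
      by_cases hp : p = st
      · subst hp
        have hs : (runDFA n M₀).step (some (Sum.inl p)) (Sum.inl (p, a)) =
            some (Sum.inl (stepQ n M₀ p a)) := if_pos rfl
        rw [hs] at hx
        obtain ⟨w, hw1, hw2⟩ := ih _ hx
        refine ⟨a :: w, ?_, hw2⟩
        rw [hw1]
        rfl
      · have hs : (runDFA n M₀).step (some (Sum.inl st)) (Sum.inl (p, a)) = none :=
          if_neg hp
        rw [hs, runDFA_dead] at hx
        exact absurd hx (by simp)
    | inr p =>
      by_cases hp : p = st ∧ st ∈ acceptQ n M₀
      · have hs : (runDFA n M₀).step (some (Sum.inl st)) (Sum.inr p) = some (Sum.inr ()) :=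
          if_pos hp
        rw [hs] at hx
        have hr : r = [] := runDFA_post n M₀ r hx
        subst hr
        obtain ⟨rfl, hacc⟩ := hp
        exact ⟨[], rfl, hacc⟩
      · have hs : (runDFA n M₀).step (some (Sum.inl st)) (Sum.inr p) = none :=
          if_neg hp
        rw [hs, runDFA_dead] at hx
        exact absurd hx (by simp)

end Main

section Main2

variable (n : ℤ) {σ₀ : Type} (M₀ : DFA Alph σ₀)

/-- the Schreier-type edge matrix -/
noncomputable def Emat (c : Cmat n) (a : Alph) : M2 :=
  repM n c * phiLetter a * inv2 (repM n (c * pr n (phiLetter a)))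

theorem pr_phi_exists_mulw {n : ℤ} {c : Cmat n} (hc : ∃ v, pr n (phi v) = c)
    (w : List Alph) : ∃ v, pr n (phi v) = c * pr n (phi w) := by
  obtain ⟨v, hv⟩ := hc
  exact ⟨v ++ w, by rw [phi_append, map_mul, hv]⟩

theorem pr_phiLetter (a : Alph) : pr n (phiLetter a) = pr n (phi [a]) := by
  rw [phi_cons, phi_nil, mul_one]

theorem Emat_dvd (hn : n ≠ 0) {c : Cmat n} (hc : ∃ v, pr n (phi v) = c) (a : Alph) :
    n ∣ (Emat n c a) 1 0 := by
  have h1 : pr n (repM n c * phiLetter a) = c * pr n (phiLetter a) := by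
    rw [map_mul, pr_repM hc]
  exact dvd_sandwich hn (pr_phiLetter n a ▸ pr_phi_exists_mulw hc [a]) h1

theorem Emat_isGL (c : Cmat n) (a : Alph) : IsGL (Emat n c a) :=
  ((isGL_repM n c).mul (isGL_letter a)).mul (isGL_inv2 (isGL_repM n _))

/-- the output substitution -/
noncomputable def outF : (QC n (σ₀ := σ₀) × Alph) ⊕ QC n (σ₀ := σ₀) → List Alph
  | Sum.inl (q, a) => wordOf (conjD n (Emat n q.2 a))
  | Sum.inr q => wordOf (conjD n (repM n q.2))

theorem outF_ne_nil (d : (QC n (σ₀ := σ₀) × Alph) ⊕ QC n (σ₀ := σ₀)) : outF n d ≠ [] := by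
  cases d with
  | inl p => exact wordOf_ne_nil _
  | inr q => exact wordOf_ne_nil _

theorem conjD_mul' {n : ℤ} (hn : n ≠ 0) {A B : M2} (hA : n ∣ A 1 0) (hB : n ∣ B 1 0) :
    conjD n (A * B) = conjD n A * conjD n B :=
  conjD_mul one_ne_zero hn hA hB

set_option maxHeartbeats 1000000 in
theorem tele (hn : n ≠ 0) :
    ∀ (w : List Alph) (st : QC n (σ₀ := σ₀)), (∃ v, pr n (phi v) = st.2) →
    phi ((ann n M₀ st w).flatMap (fun p => outF n (Sum.inl p))) =
      conjD n (repM n st.2 * phi w * inv2 (repM n (st.2 * pr n (phi w)))) := by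
  intro w
  induction w with
  | nil =>
    intro st hc
    rw [show ((ann n M₀ st []).flatMap fun p => outF n (Sum.inl p)) = [] from rfl,
      phi_nil, map_one, mul_one, mul_one,
      mul_inv2 (isGL_repM n st.2), conjD_one]
  | cons a w ih =>
    intro st hc
    have step2 : (stepQ n M₀ st a).2 = st.2 * pr n (phiLetter a) := rfl
    have hc' : ∃ v, pr n (phi v) = (stepQ n M₀ st a).2 := by
      rw [step2, pr_phiLetter]
      exact pr_phi_exists_mulw hc [a]
    rw [show ann n M₀ st (a :: w) = (st, a) :: ann n M₀ (stepQ n M₀ st a) w from rfl,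
      List.flatMap_cons, phi_append]
    rw [show phi (outF n (Sum.inl (st, a))) = conjD n (Emat n st.2 a) from
      phi_wordOf (isGL_conjD (Emat_dvd n hn hc a) (Emat_isGL n st.2 a))]
    rw [ih (stepQ n M₀ st a) hc']
    have hF : n ∣ (repM n (stepQ n M₀ st a).2 * phi w *
        inv2 (repM n ((stepQ n M₀ st a).2 * pr n (phi w)))) 1 0 := by
      apply dvd_sandwich hn (pr_phi_exists_mulw hc' w)
      rw [map_mul, pr_repM hc']
    rw [← conjD_mul' hn (Emat_dvd n hn hc a) hF]
    congr 1
    rw [Emat, step2, phi_cons, map_mul]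
    have hcan : inv2 (repM n (st.2 * pr n (phiLetter a))) *
        repM n (st.2 * pr n (phiLetter a)) = 1 := inv2_mul (isGL_repM n _)
    simp only [mul_assoc]
    rw [← mul_assoc (inv2 (repM n (st.2 * pr n (phiLetter a))))
      (repM n (st.2 * pr n (phiLetter a))), hcan, one_mul]

theorem phi_run (hn : n ≠ 0) (w : List Alph) (hd : n ∣ phi w 1 0) :
    phi (((ann n M₀ ((M₀.start, 1) : QC n (σ₀ := σ₀)) w).map Sum.inl ++
        [Sum.inr (List.foldl (stepQ n M₀) (M₀.start, 1) w)]).flatMap (outF n)) =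
      conjD n (phi w) := by
  have hr : ∃ v, pr n (phi v) = pr n (phi w) := ⟨w, rfl⟩
  have h0 : (pr n (phi w)) 1 0 = 0 := (pr_dvd_iff hn (phi w)).mpr hd
  have hdr : n ∣ (repM n (pr n (phi w))) 1 0 := dvd_repM hn hr h0
  rw [List.flatMap_append, phi_append, List.flatMap_map]
  have h1 : phi ((ann n M₀ ((M₀.start, 1) : QC n (σ₀ := σ₀)) w).flatMap
      (fun p => outF n (Sum.inl p))) = conjD n (repM n (1 : Cmat n) * phi w *
        inv2 (repM n ((1 : Cmat n) * pr n (phi w)))) :=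
    tele n M₀ hn w (M₀.start, 1) ⟨[], by rw [phi_nil, map_one]⟩
  have hqf : (List.foldl (stepQ n M₀) ((M₀.start, 1) : QC n (σ₀ := σ₀)) w).2 =
      pr n (phi w) := by
    rw [foldl_stepQ, one_mul]
  have h2 : phi ([Sum.inr (List.foldl (stepQ n M₀) ((M₀.start, 1) : QC n (σ₀ := σ₀)) w)].flatMap
      (outF n)) = conjD n (repM n (pr n (phi w))) := by
    show phi (outF n (Sum.inr _) ++ []) = _
    rw [List.append_nil]
    show phi (wordOf (conjD n (repM n _))) = _
    rw [hqf]
    exact phi_wordOf (isGL_conjD hdr (isGL_repM n _))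
  rw [h1, h2, repM_one, one_mul, one_mul]
  have hE : n ∣ (phi w * inv2 (repM n (pr n (phi w)))) 1 0 :=
    dvd_sandwich hn hr rfl
  rw [← conjD_mul' hn hE hdr, mul_assoc, inv2_mul (isGL_repM n _), mul_one]

end Main2

/-- For `D = [[m,0],[0,mn]]` and a regular language `L`, there is a regular language `L'`
whose image under φ is the set of `B ∈ GL(2,ℤ)` such that `φ(w)·D = D·B` for some `w ∈ L`
with `φ(w) ∈ H(n)`. -/
theorem conjugates_regular (m n : ℤ) (hm : m ≠ 0) (hn : n ≠ 0)
    (L : Language Alph) (hL : L.IsRegular) :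
    ∃ L' : Language Alph, L'.IsRegular ∧
      phi '' L' = {B : M2 | IsGL B ∧ ∃ w ∈ L, n ∣ phi w 1 0 ∧
        phi w * !![m, 0; 0, m * n] = !![m, 0; 0, m * n] * B} := by
  classical
  obtain ⟨σ₀, hFin, M₀, hM₀⟩ := hL
  haveI : NeZero n.natAbs := ⟨Int.natAbs_ne_zero.mpr hn⟩
  refine ⟨{x | ∃ r ∈ (runDFA n M₀).accepts, x = r.flatMap (outF n)},
    isRegular_image (outF n) (runDFA n M₀) (outF_ne_nil n), ?_⟩
  ext B
  simp only [Set.mem_image, Set.mem_setOf_eq]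
  constructor
  · rintro ⟨x, ⟨r, hr, rfl⟩, rfl⟩
    have hr' : (runDFA n M₀).evalFrom (runDFA n M₀).start r = some (Sum.inr ()) := hr
    obtain ⟨w, rfl, hacc⟩ := runDFA_sound n M₀ r (M₀.start, 1) hr'
    have hfold := foldl_stepQ n M₀ w M₀.start 1
    have haccept : M₀.evalFrom M₀.start w ∈ M₀.accept := by
      have := hacc.1
      rw [hfold] at this
      exact this
    have h0 : (pr n (phi w)) 1 0 = 0 := by
      have := hacc.2
      rw [hfold, one_mul] at this
      exact this
    have hd : n ∣ phi w 1 0 := (pr_dvd_iff hn (phi w)).mp h0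
    refine ⟨isGL_phi _, w, ?_, hd, ?_⟩
    · rw [← hM₀]
      exact haccept
    · rw [phi_run n M₀ hn w hd]
      exact D_conjD m hd
  · rintro ⟨hGL, w, hwL, hd, heq⟩
    have h1 : phi w * Dmat m n = Dmat m n * B := heq
    rw [D_conjD m hd] at h1
    have hB : B = conjD n (phi w) := (Dcancel hm hn h1).symm
    have h0 : (pr n (phi w)) 1 0 = 0 := (pr_dvd_iff hn (phi w)).mpr hd
    have hacc : List.foldl (stepQ n M₀) ((M₀.start, 1) : QC n (σ₀ := σ₀)) w ∈
        acceptQ n M₀ := by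
      rw [foldl_stepQ]
      refine ⟨?_, ?_⟩
      · show M₀.evalFrom M₀.start w ∈ M₀.accept
        rw [← hM₀] at hwL
        exact hwL
      · rw [one_mul]
        exact h0
    refine ⟨((ann n M₀ ((M₀.start, 1) : QC n (σ₀ := σ₀)) w).map Sum.inl ++
        [Sum.inr (List.foldl (stepQ n M₀) (M₀.start, 1) w)]).flatMap (outF n),
      ⟨_, ?_, rfl⟩, ?_⟩
    · show (runDFA n M₀).evalFrom (some (Sum.inl ((M₀.start, 1) : QC n (σ₀ := σ₀)))) _ ∈
        (runDFA n M₀).accept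
      rw [runDFA_complete n M₀ w (M₀.start, 1) hacc]
      rfl
    · rw [phi_run n M₀ hn w hd, hB]
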